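/- Multiplicity of equilibrium: there exists ε > 0 such that for every x ∈ (0, ε], the balanced pair (x, B x) is a Nash equilibrium of the interdealer game satisfying the strict inequalities x < m_A(B x) and B x > s_A(x); moreover the map x ↦ (x, B x) is injective on (0, ε], so the set of Nash equilibria is a continuum (in particular, infinite). -/
import Mathlib


open Set

/-- Interdealer trade quantity `Q(x,y) = min (D x) (S y)`. -/
noncomputable def interQ (D S : ℝ → ℝ) (x y : ℝ) : ℝ := min (D x) (S y)

/-- Payoff of `BD_mm`. -/
noncomputable def piMM (D S : ℝ → ℝ) (x y : ℝ) : ℝ :=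
  (1 / 2) * max (y - x) 0 * interQ D S x y - max (D x - interQ D S x y) 0 * x

/-- Payoff of `BD_rm`. -/
noncomputable def piRM (D S : ℝ → ℝ) (x y : ℝ) : ℝ :=
  (1 / 2) * max (y - x) 0 * interQ D S x y - max (S y - interQ D S x y) 0 * y

/-- Nash equilibrium of the interdealer game. -/
def IsNash (D S : ℝ → ℝ) (rb x y : ℝ) : Prop :=
  0 ≤ x ∧ x ≤ y ∧ y ≤ rb ∧
  (∀ x' ∈ Set.Icc (0:ℝ) y, piMM D S x' y ≤ piMM D S x y) ∧
  (∀ y' ∈ Set.Icc x rb, piRM D S x y' ≤ piRM D S x y)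

set_option maxHeartbeats 1000000 in
/-- Multiplicity of equilibrium: there is `ε > 0` such that every balanced pair
`(x, B x)` with `x ∈ (0, ε]` is a Nash equilibrium with strict constrained
inequalities; the map `x ↦ (x, B x)` is injective there, so the set of Nash
equilibria is a continuum (in particular infinite). -/
theorem multiplicity_of_equilibrium
    (rhat rb Tmax : ℝ) (D S B mA sA : ℝ → ℝ)
    (hrhat : 0 < rhat) (hrb : rhat < rb) (hTmax : 0 < Tmax)
    (hDc : ContinuousOn D (Icc 0 rb)) (hDm : StrictMonoOn D (Icc 0 rb))
    (hD0 : D 0 = 0) (hDr : D rhat = Tmax)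
    (hSc : ContinuousOn S (Icc 0 rb)) (hSa : StrictAntiOn S (Icc 0 rb))
    (hSb : S rb = 0) (hSr : S rhat = Tmax)
    (U : Set ℝ) (hUo : IsOpen U) (hU : Icc (0:ℝ) rb ⊆ U)
    (hD2 : ContDiffOn ℝ 2 D U) (hS2 : ContDiffOn ℝ 2 S U)
    (hD' : ∀ x ∈ Icc (0:ℝ) rb, 0 < deriv D x)
    (hD'' : ∀ x ∈ Icc (0:ℝ) rb, deriv (deriv D) x < 0)
    (hS' : ∀ x ∈ Icc (0:ℝ) rb, deriv S x < 0)
    (hS'' : ∀ x ∈ Icc (0:ℝ) rb, deriv (deriv S) x < 0)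
    (hB : ∀ x ∈ Icc (0:ℝ) rhat, B x ∈ Icc rhat rb ∧ S (B x) = D x)
    (hmA : ∀ y ∈ Ioc (0:ℝ) rb, mA y ∈ Icc (0:ℝ) y ∧
      (∀ r ∈ Icc (0:ℝ) y, (y - r) * D r ≤ (y - mA y) * D (mA y)) ∧
      (∀ m ∈ Icc (0:ℝ) y,
        (∀ r ∈ Icc (0:ℝ) y, (y - r) * D r ≤ (y - m) * D m) → m = mA y))
    (hsA : ∀ x ∈ Ico (0:ℝ) rb, sA x ∈ Icc x rb ∧
      (∀ r ∈ Icc x rb, (r - x) * S r ≤ (sA x - x) * S (sA x)) ∧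
      (∀ m ∈ Icc x rb,
        (∀ r ∈ Icc x rb, (r - x) * S r ≤ (m - x) * S m) → m = sA x)) :
    ∃ ε > (0:ℝ),
      (∀ x ∈ Ioc (0:ℝ) ε,
        IsNash D S rb x (B x) ∧ x < mA (B x) ∧ sA x < B x) ∧
      InjOn (fun x => (x, B x)) (Ioc (0:ℝ) ε) ∧
      {p : ℝ × ℝ | IsNash D S rb p.1 p.2}.Infinite := by
  have h0rb : (0:ℝ) ≤ rb := le_of_lt (hrhat.trans hrb)
  have hDdc : ContinuousOn (deriv D) (Icc 0 rb) :=
    (hD2.continuousOn_deriv_of_isOpen hUo (by norm_num)).mono hU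
  have hSdc : ContinuousOn (deriv S) (Icc 0 rb) :=
    (hS2.continuousOn_deriv_of_isOpen hUo (by norm_num)).mono hU
  have hDdiff : DifferentiableOn ℝ D (Icc 0 rb) :=
    (hD2.differentiableOn (by norm_num)).mono hU
  have hSdiff : DifferentiableOn ℝ S (Icc 0 rb) :=
    (hS2.differentiableOn (by norm_num)).mono hU
  have hDdanti : StrictAntiOn (deriv D) (Icc 0 rb) :=
    strictAntiOn_of_deriv_neg (convex_Icc 0 rb) hDdc
      (fun t ht => hD'' t (interior_subset ht))
  have hSdanti : StrictAntiOn (deriv S) (Icc 0 rb) :=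
    strictAntiOn_of_deriv_neg (convex_Icc 0 rb) hSdc
      (fun t ht => hS'' t (interior_subset ht))
  set m : ℝ := min (deriv D rb) (-(deriv S 0)) with hm_def
  have hmpos : 0 < m :=
    lt_min (hD' rb ⟨h0rb, le_refl rb⟩) (neg_pos.mpr (hS' 0 ⟨le_refl 0, h0rb⟩))
  have mvtD : ∀ a b : ℝ, 0 ≤ a → a < b → b ≤ rb → m * (b - a) ≤ D b - D a := by
    intro a b ha hab hb
    obtain ⟨c, hc, hceq⟩ := exists_deriv_eq_slope D hab
      (hDc.mono (Icc_subset_Icc ha hb))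
      (hDdiff.mono (fun t ht => ⟨ha.trans ht.1.le, ht.2.le.trans hb⟩))
    have hc1 : c ∈ Icc (0:ℝ) rb := ⟨ha.trans hc.1.le, hc.2.le.trans hb⟩
    have h1 : m ≤ deriv D c :=
      (min_le_left _ _).trans
        (hDdanti hc1 ⟨h0rb, le_refl rb⟩ (hc.2.trans_le hb)).le
    have hba : (0:ℝ) < b - a := by linarith
    have heq : deriv D c * (b - a) = D b - D a := by
      rw [hceq]; field_simp
    linarith [mul_le_mul_of_nonneg_right h1 hba.le]
  have mvtS : ∀ a b : ℝ, 0 ≤ a → a < b → b ≤ rb → m * (b - a) ≤ S a - S b := by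
    intro a b ha hab hb
    obtain ⟨c, hc, hceq⟩ := exists_deriv_eq_slope S hab
      (hSc.mono (Icc_subset_Icc ha hb))
      (hSdiff.mono (fun t ht => ⟨ha.trans ht.1.le, ht.2.le.trans hb⟩))
    have hc1 : c ∈ Icc (0:ℝ) rb := ⟨ha.trans hc.1.le, hc.2.le.trans hb⟩
    have h1 : deriv S c < deriv S 0 :=
      hSdanti ⟨le_refl 0, h0rb⟩ hc1 (lt_of_le_of_lt ha hc.1)
    have h2 : m ≤ -(deriv S 0) := min_le_right _ _
    have hba : (0:ℝ) < b - a := by linarith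
    have heq : deriv S c * (b - a) = S b - S a := by
      rw [hceq]; field_simp
    linarith [mul_le_mul_of_nonneg_right (show deriv S c ≤ -m by linarith) hba.le]
  have hDmono := hDm.monotoneOn
  have hSanti := hSa.antitoneOn
  have h0mem : (0:ℝ) ∈ Icc (0:ℝ) rb := ⟨le_refl 0, h0rb⟩
  have hrbmem : rb ∈ Icc (0:ℝ) rb := ⟨h0rb, le_refl rb⟩
  have hDnn : ∀ t ∈ Icc (0:ℝ) rb, 0 ≤ D t := fun t ht => hD0 ▸ hDmono h0mem ht ht.1
  have hSnn : ∀ t ∈ Icc (0:ℝ) rb, 0 ≤ S t := fun t ht => hSb ▸ hSanti ht hrbmem ht.2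
  have hcb : 0 < m * (rhat / 2) := by positivity
  obtain ⟨δ, hδ, hδD⟩ := Metric.continuousWithinAt_iff.mp (hDc 0 h0mem) (m * (rhat/2)) hcb
  set ε := min (rhat/4) (δ/4) with hε_def
  have hεpos : 0 < ε := lt_min (by linarith) (by linarith)
  have hε1 : ε ≤ rhat/4 := min_le_left _ _
  have hε2 : ε ≤ δ/4 := min_le_right _ _
  have h2εrb : 2*ε ≤ rb := by linarith
  have hD2ε : D (2*ε) < m * (rhat/2) := by
    have h1 : (2*ε) ∈ Icc (0:ℝ) rb := ⟨by linarith, h2εrb⟩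
    have h2 : dist (2*ε) (0:ℝ) < δ := by
      rw [Real.dist_eq, sub_zero, abs_of_nonneg (by linarith : (0:ℝ) ≤ 2*ε)]
      linarith
    have := hδD h1 h2
    rw [Real.dist_eq, hD0, sub_zero] at this
    exact lt_of_le_of_lt (le_abs_self _) this
  -- main per-x claim
  have hmain : ∀ x ∈ Ioc (0:ℝ) ε,
      IsNash D S rb x (B x) ∧ x < mA (B x) ∧ sA x < B x := by
    rintro x ⟨hx0, hxε⟩
    set y := B x with hy_def
    have hBx := hB x ⟨hx0.le, by linarith⟩
    rw [← hy_def] at hBx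
    obtain ⟨⟨hy1, hy2⟩, hSyDx⟩ := hBx
    have hxmem : x ∈ Icc (0:ℝ) rb := ⟨hx0.le, by linarith⟩
    have hymem : y ∈ Icc (0:ℝ) rb := ⟨by linarith, hy2⟩
    have hxy : x < y := by linarith
    have hDx_lt : D x < m * (rhat/2) := by
      have : D x ≤ D (2*ε) := hDmono hxmem ⟨by linarith, h2εrb⟩ (by linarith)
      linarith
    have hDxpos : 0 < D x := hD0 ▸ hDm h0mem hxmem hx0
    -- strict increase of r ↦ (y - r) * D r on [0, 2ε]
    have gIncr : ∀ a b : ℝ, 0 ≤ a → a < b → b ≤ 2*ε → (y - a) * D a < (y - b) * D b := by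
      intro a b ha hab hb
      have hbrb : b ≤ rb := by linarith
      have hamem : a ∈ Icc (0:ℝ) rb := ⟨ha, by linarith⟩
      have hDa : D a ≤ D (2*ε) := hDmono hamem ⟨by linarith, h2εrb⟩ (by linarith)
      have hmvt := mvtD a b ha hab hbrb
      have h1 : (y - b) * (m * (b - a)) ≤ (y - b) * (D b - D a) :=
        mul_le_mul_of_nonneg_left hmvt (by linarith)
      have h2 : m * (rhat/2) ≤ m * (y - b) :=
        mul_le_mul_of_nonneg_left (by linarith) hmpos.le
      have h3 : 0 < (b - a) * (m * (y - b) - D a) :=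
        mul_pos (by linarith) (by linarith)
      linarith [h1, h3]
    have hQ : interQ D S x y = D x := by rw [interQ, hSyDx, min_self]
    have hπmm : piMM D S x y = (1/2) * (y - x) * D x := by
      rw [piMM, hQ, sub_self, max_self, zero_mul, sub_zero,
        max_eq_left (by linarith : (0:ℝ) ≤ y - x)]
    have hπrm : piRM D S x y = (1/2) * (y - x) * D x := by
      rw [piRM, hQ, hSyDx, sub_self, max_self, zero_mul, sub_zero,
        max_eq_left (by linarith : (0:ℝ) ≤ y - x)]
    have hMM : ∀ x' ∈ Icc (0:ℝ) y, piMM D S x' y ≤ piMM D S x y := by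
      intro x' hx'
      have hx'mem : x' ∈ Icc (0:ℝ) rb := ⟨hx'.1, hx'.2.trans hy2⟩
      rw [hπmm]
      rcases le_or_gt x' x with hle | hlt
      · have hDx' : D x' ≤ D x := hDmono hx'mem hxmem hle
        have hQ' : interQ D S x' y = D x' := by
          rw [interQ, hSyDx]; exact min_eq_left hDx'
        have hval : piMM D S x' y = (1/2) * (y - x') * D x' := by
          rw [piMM, hQ', sub_self, max_self, zero_mul, sub_zero,
            max_eq_left (by linarith [hx'.2] : (0:ℝ) ≤ y - x')]
        rw [hval]
        rcases eq_or_lt_of_le hle with heq | hlt'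
        · rw [heq]
        · have := gIncr x' x hx'.1 hlt' (by linarith)
          linarith
      · have hDx' : D x ≤ D x' := hDmono hxmem hx'mem hlt.le
        have hQ' : interQ D S x' y = D x := by
          rw [interQ, hSyDx]; exact min_eq_right hDx'
        have hval : piMM D S x' y = (1/2) * (y - x') * D x - (D x' - D x) * x' := by
          rw [piMM, hQ', max_eq_left (by linarith [hx'.2] : (0:ℝ) ≤ y - x'),
            max_eq_left (by linarith : (0:ℝ) ≤ D x' - D x)]
        rw [hval]
        linarith [mul_nonneg (sub_nonneg.mpr hDx') hx'.1,
          mul_nonneg (sub_nonneg.mpr hlt.le) hDxpos.le]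
    have hRM : ∀ y' ∈ Icc x rb, piRM D S x y' ≤ piRM D S x y := by
      intro y' hy'
      have hy'mem : y' ∈ Icc (0:ℝ) rb := ⟨hx0.le.trans hy'.1, hy'.2⟩
      rw [hπrm]
      rcases le_or_gt y' y with hle | hlt
      · have hSy' : D x ≤ S y' := by
          rw [← hSyDx]; exact hSanti hy'mem hymem hle
        have hQ' : interQ D S x y' = D x := by
          rw [interQ]; exact min_eq_left hSy'
        have hval : piRM D S x y' = (1/2) * (y' - x) * D x - (S y' - D x) * y' := by
          rw [piRM, hQ', max_eq_left (sub_nonneg.mpr hy'.1),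
            max_eq_left (by linarith : (0:ℝ) ≤ S y' - D x)]
        rw [hval]
        linarith [mul_nonneg (sub_nonneg.mpr hSy') (hx0.le.trans hy'.1),
          mul_nonneg (sub_nonneg.mpr hle) hDxpos.le]
      · have hSy' : S y' ≤ D x := by
          rw [← hSyDx]; exact hSanti hymem hy'mem hlt.le
        have hQ' : interQ D S x y' = S y' := by
          rw [interQ]; exact min_eq_right hSy'
        have hval : piRM D S x y' = (1/2) * (y' - x) * S y' := by
          rw [piRM, hQ', sub_self, max_self, zero_mul, sub_zero,
            max_eq_left (sub_nonneg.mpr hy'.1)]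
        rw [hval]
        have hmvt := mvtS y y' (by linarith) hlt hy'.2
        have h1 : (y - x) * (m * (y' - y)) ≤ (y - x) * (S y - S y') :=
          mul_le_mul_of_nonneg_left hmvt (by linarith)
        have h2 : m * (rhat/2) ≤ m * (y - x) :=
          mul_le_mul_of_nonneg_left (by linarith) hmpos.le
        have h3 : 0 ≤ (y' - y) * (m * (y - x) - S y') :=
          le_of_lt (mul_pos (by linarith) (by linarith))
        rw [← hSyDx]
        linarith [h1, h3]
    obtain ⟨⟨hm1, hm2⟩, hmmax, _⟩ := hmA y ⟨by linarith, hy2⟩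
    have hxmA : x < mA y := by
      by_contra hcon
      push_neg at hcon
      have h1 : (y - mA y) * D (mA y) ≤ (y - x) * D x := by
        rcases eq_or_lt_of_le hcon with heq | hlt
        · rw [heq]
        · exact (gIncr (mA y) x hm1 hlt (by linarith)).le
      have h2 : (y - x) * D x < (y - 2*x) * D (2*x) :=
        gIncr x (2*x) hx0.le (by linarith) (by linarith)
      have h3 : (y - 2*x) * D (2*x) ≤ (y - mA y) * D (mA y) :=
        hmmax (2*x) ⟨by linarith, by linarith⟩
      linarith
    obtain ⟨⟨hs1, hs2⟩, hsmax, _⟩ := hsA x ⟨hx0.le, by linarith⟩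
    have hsAx : sA x < y := by
      by_contra hcon
      push_neg at hcon
      have hmvt' : m * x ≤ S (y - x) - S y := by
        have := mvtS (y - x) y (by linarith) (by linarith) hy2
        linarith
      have h2 : m * (rhat/2) ≤ m * (y - 2*x) :=
        mul_le_mul_of_nonneg_left (by linarith) hmpos.le
      have hA : (y - x) * S y < (y - 2*x) * S (y - x) := by
        have h1 : (y - 2*x) * (S y + m*x) ≤ (y - 2*x) * S (y - x) :=
          mul_le_mul_of_nonneg_left (by linarith) (by linarith)
        have h3 : 0 < x * (m*(y - 2*x) - S y) :=
          mul_pos hx0 (by linarith [hSyDx, hDx_lt])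
        linarith [h1, h3]
      have hB1 : (y - x - x) * S (y - x) ≤ (sA x - x) * S (sA x) :=
        hsmax (y - x) ⟨by linarith, by linarith⟩
      have hB2 : (sA x - x) * S (sA x) ≤ (y - x) * S y := by
        rcases eq_or_lt_of_le hcon with heq | hlt
        · rw [← heq]
        · have hsmem : sA x ∈ Icc (0:ℝ) rb := ⟨by linarith, hs2⟩
          have hmvt2 := mvtS y (sA x) (by linarith) hlt hs2
          have hSs : S (sA x) ≤ S y := hSanti hymem hsmem hlt.le
          have h1 : (y - x) * (m * (sA x - y)) ≤ (y - x) * (S y - S (sA x)) :=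
            mul_le_mul_of_nonneg_left hmvt2 (by linarith)
          have h3 : 0 ≤ (sA x - y) * (m * (y - x) - S (sA x)) :=
            le_of_lt (mul_pos (by linarith) (by linarith [hSyDx, hDx_lt, h2, mul_nonneg hmpos.le hx0.le]))
          linarith [h1, h3]
      linarith [hA, hB1, hB2]
    exact ⟨⟨hx0.le, hxy.le, hy2, hMM, hRM⟩, hxmA, hsAx⟩
  have hinj : InjOn (fun x => (x, B x)) (Ioc (0:ℝ) ε) := by
    intro a _ b _ hab
    simpa using congrArg Prod.fst hab
  refine ⟨ε, hεpos, hmain, hinj, ?_⟩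
  have himg : (fun x => (x, B x)) '' (Ioc (0:ℝ) ε) ⊆ {p : ℝ × ℝ | IsNash D S rb p.1 p.2} := by
    rintro p ⟨x, hx, rfl⟩
    exact (hmain x hx).1
  exact Set.Infinite.mono himg (Set.Infinite.image hinj (Set.Ioc_infinite hεpos))
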